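/- Let P = {p₁, …, pₙ} (n > 1) be distinct points in ℝᵐ with the Euclidean norm and let x̄ be the minimizer of f(x) = max_i ‖x − pᵢ‖ with value r. Then there exists a subset Q ⊆ P with 2 ≤ |Q| ≤ m + 1 such that x̄ is also the minimizer of x ↦ max{‖x − q‖ : q ∈ Q}, with the same optimal value r (so the smallest enclosing ball of P is determined by at most m + 1 of its points). -/

import Mathlib

open Finset

variable {E : Type*} [NormedAddCommGroup E] [InnerProductSpace ℝ E]

/-- If `xbar` is a convex combination of points of `t` all at distance `r` from `xbar`,
then every point `x` has some point of `t` at distance at least `r`. -/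
lemma aux_min_property (t : Finset E) (ht : t.Nonempty) (w : E → ℝ)
    (hw0 : ∀ q ∈ t, 0 ≤ w q) (hw1 : ∑ q ∈ t, w q = 1)
    (xbar : E) (hx : ∑ q ∈ t, w q • q = xbar)
    (r : ℝ) (hrt : ∀ q ∈ t, ‖xbar - q‖ = r) (x : E) :
    r ≤ t.sup' ht fun q => ‖x - q‖ := by
  set g := t.sup' ht fun q => ‖x - q‖ with hg
  have hg0 : 0 ≤ g := by
    obtain ⟨q, hq⟩ := ht
    exact le_trans (norm_nonneg _) (Finset.le_sup' (fun q => ‖x - q‖) hq)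
  have hr0 : 0 ≤ r := by
    obtain ⟨q, hq⟩ := ht
    rw [← hrt q hq]; exact norm_nonneg _
  have hsum0 : ∑ q ∈ t, w q • (xbar - q) = 0 := by
    simp only [smul_sub, Finset.sum_sub_distrib, hx, ← Finset.sum_smul, hw1, one_smul,
      sub_self]
  have hexp : ∀ q ∈ t, ‖x - q‖ ^ 2
      = ‖x - xbar‖ ^ 2 + 2 * (inner ℝ (x - xbar) (xbar - q) : ℝ) + ‖xbar - q‖ ^ 2 := by
    intro q hq
    have : x - q = (x - xbar) + (xbar - q) := by abel
    rw [this, norm_add_sq_real]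
  have key : r ^ 2 + ‖x - xbar‖ ^ 2 = ∑ q ∈ t, w q * ‖x - q‖ ^ 2 := by
    have : ∑ q ∈ t, w q * ‖x - q‖ ^ 2
        = (∑ q ∈ t, w q) * ‖x - xbar‖ ^ 2
          + 2 * (inner ℝ (x - xbar) (∑ q ∈ t, w q • (xbar - q)) : ℝ)
          + (∑ q ∈ t, w q) * r ^ 2 := by
      rw [inner_sum, Finset.sum_mul, Finset.sum_mul, Finset.mul_sum, ← Finset.sum_add_distrib,
        ← Finset.sum_add_distrib]
      refine Finset.sum_congr rfl fun q hq => ?_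
      rw [hexp q hq, hrt q hq, real_inner_smul_right]
      ring
    rw [this, hsum0, inner_zero_right, hw1]; ring
  have hle : ∑ q ∈ t, w q * ‖x - q‖ ^ 2 ≤ g ^ 2 := by
    calc ∑ q ∈ t, w q * ‖x - q‖ ^ 2 ≤ ∑ q ∈ t, w q * g ^ 2 := by
          refine Finset.sum_le_sum fun q hq => ?_
          exact mul_le_mul_of_nonneg_left
            (pow_le_pow_left₀ (norm_nonneg _) (Finset.le_sup' (fun q => ‖x - q‖) hq) 2) (hw0 q hq)
      _ = g ^ 2 := by rw [← Finset.sum_mul, hw1, one_mul]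
  have : r ^ 2 ≤ g ^ 2 := by nlinarith [sq_nonneg (‖x - xbar‖)]
  nlinarith

/-- The smallest enclosing ball of a finite set of distinct points in ℝᵐ is
determined by a subset of at least 2 and at most m+1 of the points. -/
theorem smallest_enclosing_ball_determined_by_few_points
    (m n : ℕ) (hn : 1 < n) (p : Fin n → EuclideanSpace ℝ (Fin m))
    (hinj : Function.Injective p)
    (f : EuclideanSpace ℝ (Fin m) → ℝ)
    (hf : f = fun x => Finset.univ.sup' (Finset.univ_nonempty_iff.2 ⟨⟨0, by omega⟩⟩)
      fun i => ‖x - p i‖)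
    (xbar : EuclideanSpace ℝ (Fin m)) (hmin : IsMinOn f Set.univ xbar)
    (r : ℝ) (hr : r = f xbar) :
    ∃ (s : Finset (Fin n)) (hs : s.Nonempty),
      2 ≤ s.card ∧ s.card ≤ m + 1 ∧
      IsMinOn (fun x => s.sup' hs fun i => ‖x - p i‖) Set.univ xbar ∧
      (s.sup' hs fun i => ‖xbar - p i‖) = r := by
  classical
  have hUne : (Finset.univ : Finset (Fin n)).Nonempty :=
    Finset.univ_nonempty_iff.2 ⟨⟨0, by omega⟩⟩
  -- basic facts about `r`
  have hub : ∀ x i, ‖x - p i‖ ≤ f x := by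
    intro x i
    rw [hf]
    exact Finset.le_sup' (fun i => ‖x - p i‖) (Finset.mem_univ i)
  have hri : ∀ i, ‖xbar - p i‖ ≤ r := fun i => hr ▸ hub xbar i
  have hrpos : 0 < r := by
    have h01 : (⟨0, by omega⟩ : Fin n) ≠ ⟨1, hn⟩ := by simp [Fin.ext_iff]
    have hpp : p ⟨0, by omega⟩ ≠ p ⟨1, hn⟩ := fun h => h01 (hinj h)
    have h1 : (0 : ℝ) < ‖p (⟨0, by omega⟩ : Fin n) - p ⟨1, hn⟩‖ :=
      norm_sub_pos_iff.2 hpp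
    have h2 : ‖p (⟨0, by omega⟩ : Fin n) - p ⟨1, hn⟩‖
        ≤ ‖xbar - p ⟨0, by omega⟩‖ + ‖xbar - p ⟨1, hn⟩‖ := by
      have he : p (⟨0, by omega⟩ : Fin n) - p ⟨1, hn⟩
          = -(xbar - p ⟨0, by omega⟩) + (xbar - p ⟨1, hn⟩) := by abel
      rw [he]
      exact (norm_add_le _ _).trans_eq (by rw [norm_neg])
    linarith [hri (⟨0, by omega⟩ : Fin n), hri (⟨1, hn⟩ : Fin n)]
  -- the tight index set
  set T : Finset (Fin n) := Finset.univ.filter fun i => ‖xbar - p i‖ = r with hT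
  have hmemT : ∀ i, i ∈ T ↔ ‖xbar - p i‖ = r := by
    intro i; simp [hT]
  have hTne : T.Nonempty := by
    obtain ⟨i, _, hi⟩ := Finset.exists_mem_eq_sup' hUne (fun i => ‖xbar - p i‖)
    refine ⟨i, (hmemT i).2 ?_⟩
    rw [hr, hf]
    exact hi.symm
  -- xbar lies in the convex hull of the tight points
  have hmem : xbar ∈ convexHull ℝ (p '' (T : Set (Fin n))) := by
    by_contra hK
    set K := convexHull ℝ (p '' (T : Set (Fin n))) with hKdef
    have hKconv : Convex ℝ K := convex_convexHull _ _
    have hKcl : IsClosed K :=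
      ((T.finite_toSet.image p).isCompact_convexHull ℝ).isClosed
    have hKne : K.Nonempty := by
      obtain ⟨i, hi⟩ := hTne
      exact ⟨p i, subset_convexHull _ _ (Set.mem_image_of_mem _ hi)⟩
    obtain ⟨y, hyK, hy⟩ :=
      exists_norm_eq_iInf_of_complete_convex hKne hKcl.isComplete hKconv xbar
    have hproj : ∀ z ∈ K, (inner ℝ (xbar - y) (z - y) : ℝ) ≤ 0 :=
      (norm_eq_iInf_iff_real_inner_le_zero hKconv hyK).1 hy
    set d := y - xbar with hd
    have hdne : d ≠ 0 := by
      intro h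
      have : y = xbar := by rwa [sub_eq_zero] at h
      exact hK (this ▸ hyK)
    have hdn : (0 : ℝ) < ‖d‖ := norm_pos_iff.2 hdne
    have hdpos : (0 : ℝ) < ‖d‖ ^ 2 := pow_pos hdn 2
    have hdot : ∀ i ∈ T, (inner ℝ d (xbar - p i) : ℝ) ≤ -‖d‖ ^ 2 := by
      intro i hi
      have hpK : p i ∈ K := subset_convexHull _ _ (Set.mem_image_of_mem _ hi)
      have h1 : (inner ℝ (xbar - y) (p i - y) : ℝ) ≤ 0 := hproj _ hpK
      have h2 : (inner ℝ d (p i - y) : ℝ) = -(inner ℝ (xbar - y) (p i - y) : ℝ) := by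
        rw [hd, show y - xbar = -(xbar - y) from by abel, inner_neg_left]
      have h3 : xbar - p i = -d - (p i - y) := by rw [hd]; abel
      rw [h3, inner_sub_right, inner_neg_right, real_inner_self_eq_norm_sq, h2]
      linarith
    -- bound on non-tight points
    obtain ⟨c, hcr, hcb⟩ : ∃ c, c < r ∧ ∀ i, i ∉ T → ‖xbar - p i‖ ≤ c := by
      by_cases h : ((Finset.univ : Finset (Fin n)) \ T).Nonempty
      · refine ⟨(Finset.univ \ T).sup' h (fun i => ‖xbar - p i‖), ?_, ?_⟩
        · rw [Finset.sup'_lt_iff]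
          intro i hi
          refine lt_of_le_of_ne (hri i) ?_
          have hnT : i ∉ T := (Finset.mem_sdiff.1 hi).2
          exact fun hE => hnT ((hmemT i).2 hE)
        · intro i hi
          exact Finset.le_sup' (fun i => ‖xbar - p i‖)
            (Finset.mem_sdiff.2 ⟨Finset.mem_univ i, hi⟩)
      · refine ⟨r / 2, by linarith, fun i hi => absurd ⟨i, ?_⟩ h⟩
        exact Finset.mem_sdiff.2 ⟨Finset.mem_univ i, hi⟩
    set ε : ℝ := min 1 ((r - c) / (2 * ‖d‖)) with hε
    have hεpos : 0 < ε := lt_min one_pos (div_pos (by linarith) (by positivity))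
    have hε1 : ε ≤ 1 := min_le_left _ _
    have hεd : ε * ‖d‖ ≤ (r - c) / 2 := by
      have h1 : ε ≤ (r - c) / (2 * ‖d‖) := min_le_right _ _
      calc ε * ‖d‖ ≤ ((r - c) / (2 * ‖d‖)) * ‖d‖ :=
            mul_le_mul_of_nonneg_right h1 (norm_nonneg _)
        _ = (r - c) / 2 := by field_simp
    set x' := xbar + ε • d with hx'
    have hlt : f x' < r := by
      rw [hf]
      rw [Finset.sup'_lt_iff]
      intro i _
      by_cases hiT : i ∈ T
      · -- tight point: quadratic estimate
        have h3 : x' - p i = (xbar - p i) + ε • d := by rw [hx']; abel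
        have hsq : ‖x' - p i‖ ^ 2
            = ‖xbar - p i‖ ^ 2 + 2 * (ε * (inner ℝ d (xbar - p i) : ℝ)) + ε ^ 2 * ‖d‖ ^ 2 := by
          rw [h3, norm_add_sq_real, real_inner_smul_right, norm_smul, real_inner_comm]
          rw [Real.norm_eq_abs, abs_of_pos hεpos, mul_pow]
        have hir : ‖xbar - p i‖ = r := (hmemT i).1 hiT
        have hde := hdot i hiT
        have e1 : ε * (inner ℝ d (xbar - p i) : ℝ) ≤ ε * (-‖d‖ ^ 2) :=
          mul_le_mul_of_nonneg_left hde hεpos.le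
        have e2 : ε ^ 2 * ‖d‖ ^ 2 ≤ ε * ‖d‖ ^ 2 :=
          mul_le_mul_of_nonneg_right (by nlinarith : ε ^ 2 ≤ ε) hdpos.le
        have hlt2 : ‖x' - p i‖ ^ 2 < r ^ 2 := by
          rw [hsq, hir]
          nlinarith [mul_pos hεpos hdpos]
        exact lt_of_pow_lt_pow_left₀ 2 (le_of_lt hrpos) hlt2
      · -- non-tight point
        have h3 : ‖x' - p i‖ ≤ ‖xbar - p i‖ + ε * ‖d‖ := by
          have he : x' - p i = (xbar - p i) + ε • d := by rw [hx']; abel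
          rw [he]
          refine (norm_add_le _ _).trans_eq ?_
          rw [norm_smul, Real.norm_eq_abs, abs_of_pos hεpos]
        have := hcb i hiT
        linarith
    have hge : f xbar ≤ f x' := hmin (Set.mem_univ x')
    rw [← hr] at hge
    linarith
  -- Carathéodory
  rw [convexHull_eq_union] at hmem
  simp only [Set.mem_iUnion] at hmem
  obtain ⟨t, hts, hai, hmemt⟩ := hmem
  have htne : t.Nonempty := by
    rcases Finset.eq_empty_or_nonempty t with h | h
    · rw [h] at hmemt; simp at hmemt
    · exact h
  have htcard : t.card ≤ m + 1 := by
    have h1 := hai.card_le_finrank_succ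
    rw [Fintype.card_coe] at h1
    refine h1.trans ?_
    have h2 : Module.finrank ℝ
          (vectorSpan ℝ (Set.range ((↑) : t → EuclideanSpace ℝ (Fin m))))
        ≤ Module.finrank ℝ (EuclideanSpace ℝ (Fin m)) := Submodule.finrank_le _
    have h3 : Module.finrank ℝ (EuclideanSpace ℝ (Fin m)) = m := finrank_euclideanSpace_fin
    omega
  -- pull back to indices
  set s : Finset (Fin n) := T.filter fun i => p i ∈ t with hsdef
  have hsimg : s.image p = t := by
    apply Finset.Subset.antisymm
    · intro q hq
      obtain ⟨i, hi, rfl⟩ := Finset.mem_image.1 hq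
      exact (Finset.mem_filter.1 hi).2
    · intro q hq
      obtain ⟨x, hx, rfl⟩ := hts hq
      rw [Finset.mem_coe] at hx
      exact Finset.mem_image.2 ⟨x, Finset.mem_filter.2 ⟨hx, hq⟩, rfl⟩
  have hscard : s.card = t.card := by
    rw [← hsimg, Finset.card_image_of_injective _ hinj]
  have hsT : ∀ i ∈ s, ‖xbar - p i‖ = r := fun i hi =>
    (hmemT i).1 (Finset.mem_filter.1 hi).1
  have hsne : s.Nonempty := by
    rw [← Finset.card_pos, hscard, Finset.card_pos]; exact htne
  -- the value at xbar is r
  have hval : (s.sup' hsne fun i => ‖xbar - p i‖) = r := by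
    apply le_antisymm
    · exact Finset.sup'_le _ _ fun i hi => (hsT i hi).le
    · obtain ⟨i, hi⟩ := hsne
      exact (hsT i hi).ge.trans (Finset.le_sup' (fun i => ‖xbar - p i‖) hi)
  -- cardinality at least 2
  have hcard2 : 2 ≤ s.card := by
    by_contra h
    push_neg at h
    have hpos : 0 < s.card := Finset.card_pos.2 hsne
    have h1 : s.card = 1 := by omega
    have htq : t.card = 1 := by omega
    obtain ⟨q, hq⟩ := Finset.card_eq_one.1 htq
    rw [hq, Finset.coe_singleton, convexHull_singleton, Set.mem_singleton_iff] at hmemt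
    have hq' : q ∈ t := by rw [hq]; exact Finset.mem_singleton_self q
    rw [← hsimg] at hq'
    obtain ⟨i, hi, hpi⟩ := Finset.mem_image.1 hq'
    have hri' := hsT i hi
    rw [hpi, ← hmemt, sub_self, norm_zero] at hri'
    linarith
  -- sup over s equals sup over t
  have hsup : ∀ x, (t.sup' htne fun q => ‖x - q‖) = s.sup' hsne fun i => ‖x - p i‖ := by
    intro x
    apply le_antisymm
    · refine Finset.sup'_le _ _ fun q hq => ?_
      rw [← hsimg] at hq
      obtain ⟨i, hi, rfl⟩ := Finset.mem_image.1 hq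
      exact Finset.le_sup' (fun i => ‖x - p i‖) hi
    · refine Finset.sup'_le _ _ fun i hi => ?_
      have hpt : p i ∈ t := by rw [← hsimg]; exact Finset.mem_image_of_mem p hi
      exact Finset.le_sup' (fun q => ‖x - q‖) hpt
  -- minimality
  have hminOn : IsMinOn (fun x => s.sup' hsne fun i => ‖x - p i‖) Set.univ xbar := by
    intro x _
    simp only [Set.mem_setOf_eq]
    rw [hval]
    have hch := hmemt
    rw [Finset.convexHull_eq] at hch
    obtain ⟨w, hw0, hw1, hwc⟩ := hch
    rw [Finset.centerMass_eq_of_sum_1 _ _ hw1] at hwc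
    simp only [id] at hwc
    have haux := aux_min_property t htne w hw0 hw1 xbar hwc r
      (fun q hq => by
        rw [← hsimg] at hq
        obtain ⟨i, hi, rfl⟩ := Finset.mem_image.1 hq
        exact hsT i hi) x
    rw [hsup x] at haux
    exact haux
  exact ⟨s, hsne, hcard2, by rw [hscard]; exact htcard, hminOn, hval⟩
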